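/- arXiv:0712.4160 — 5 statements merged into one kernel-verified Lean document; each statement's English description precedes it below -/
import Mathlib

section
/- Let (x, x̄, p, q) ∈ Λ^c(v,d) and let h_1,…,h_r be a path in the doubled quiver, i.e. a sequence of arrows (each arrow being some x_i : V_i → V_{i+1} or some x̄_i : V_{i+1} → V_i) such that the target vertex of h_t equals the source vertex of h_{t+1} for 1 ≤ t < r. Let i′ be the source vertex of h_1 and j′ the target vertex of h_r. Then there exists an element P of the (non-unital) ℂ-subalgebra of End(D_1 ⊕ ⋯ ⊕ D_{n−1}) generated by the maps q_{l→j} p_{i→l} (for i, j ∈ {1,…,n−1} and 1 ≤ l ≤ min(i,j), each extended by zero to an endomorphism of ⊕_k D_k) such that the linear map q_{j′} ∘ x_{h_r} ∘ x_{h_{r−1}} ∘ ⋯ ∘ x_{h_1} ∘ p_{i′} : D_{i′} → D_{j′} equals the component of P from D_{i′} to D_{j′} (i.e. the composition of the inclusion D_{i′} ↪ ⊕_k D_k, P, and the projection ⊕_k D_k ↠ D_{j′}). -/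
namespace QuiverA

variable {V D : ℕ → Type} [∀ i, AddCommGroup (V i)] [∀ i, Module ℂ (V i)]
  [∀ i, AddCommGroup (D i)] [∀ i, Module ℂ (D i)]

/-- An arrow of the doubled quiver: `(i, true)` is the forward arrow `x_i : V_i → V_{i+1}`,
`(i, false)` is the backward arrow `x̄_i : V_{i+1} → V_i`. -/
def asrc (a : ℕ × Bool) : ℕ := if a.2 then a.1 else a.1 + 1

def atgt (a : ℕ × Bool) : ℕ := if a.2 then a.1 + 1 else a.1

/-- The linear map attached to an arrow of the doubled quiver. -/
def step (x : ∀ i, V i →ₗ[ℂ] V (i + 1)) (xbar : ∀ i, V (i + 1) →ₗ[ℂ] V i) :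
    (a : ℕ × Bool) → (V (asrc a) →ₗ[ℂ] V (atgt a))
  | (i, true) => x i
  | (i, false) => xbar i

def homOfEq {i j : ℕ} (h : i = j) : V i →ₗ[ℂ] V j := h ▸ LinearMap.id

/-- The final vertex of a path (list of arrows) starting at vertex `v`. -/
def endVertex : List (ℕ × Bool) → ℕ → ℕ
  | [], v => v
  | a :: L, _ => endVertex L (atgt a)

/-- The composition `x_{h_r} ∘ ⋯ ∘ x_{h_1}` of the maps along a path of arrows starting
at vertex `v` (junk `0` factor inserted where sources do not match). -/
def pathComp (x : ∀ i, V i →ₗ[ℂ] V (i + 1)) (xbar : ∀ i, V (i + 1) →ₗ[ℂ] V i) :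
    (L : List (ℕ × Bool)) → (v : ℕ) → (V v →ₗ[ℂ] V (endVertex L v))
  | [], _ => LinearMap.id
  | a :: L, v => pathComp x xbar L (atgt a) ∘ₗ
      (if h : asrc a = v then step x xbar a ∘ₗ homOfEq h.symm else 0)

/-- Composition `x_{i-1} ∘ ⋯ ∘ x_j : V_j → V_i` of the forward maps. -/
def xPath (x : ∀ i, V i →ₗ[ℂ] V (i + 1)) (j : ℕ) : (i : ℕ) → (V j →ₗ[ℂ] V i)
  | 0 => if h : j = 0 then h ▸ LinearMap.id else 0
  | (i + 1) => if h : j = i + 1 then h ▸ LinearMap.id else (x i) ∘ₗ xPath x j i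

/-- Composition `x̄_i ∘ ⋯ ∘ x̄_{j-1} : V_j → V_i` of the backward maps. -/
def xbarPath (xbar : ∀ i, V (i + 1) →ₗ[ℂ] V i) (i : ℕ) : (j : ℕ) → (V j →ₗ[ℂ] V i)
  | 0 => if h : i = 0 then (by rw [h]; exact LinearMap.id) else 0
  | (j + 1) => if h : i = j + 1 then (by rw [h]; exact LinearMap.id)
      else xbarPath xbar i j ∘ₗ (xbar j)

/-- `p_{j→i} = x̄_i⋯x̄_{j-1} p_j : D_j → V_i` (for `i ≤ j`). -/
def pTo (xbar : ∀ i, V (i + 1) →ₗ[ℂ] V i) (p : ∀ i, D i →ₗ[ℂ] V i) (j i : ℕ) :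
    D j →ₗ[ℂ] V i :=
  xbarPath xbar i j ∘ₗ p j

/-- `q_{j→i} = q_i x_{i-1}⋯x_j : V_j → D_i` (for `j ≤ i`). -/
def qTo (x : ∀ i, V i →ₗ[ℂ] V (i + 1)) (q : ∀ i, V i →ₗ[ℂ] D i) (j i : ℕ) :
    V j →ₗ[ℂ] D i :=
  q i ∘ₗ xPath x j i

/-- The generators `q_{l→j} p_{i→l}` extended by zero to `End(Π_{k<n} D_k)`. -/
def qpGens (n : ℕ) (x : ∀ i, V i →ₗ[ℂ] V (i + 1)) (xbar : ∀ i, V (i + 1) →ₗ[ℂ] V i)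
    (p : ∀ i, D i →ₗ[ℂ] V i) (q : ∀ i, V i →ₗ[ℂ] D i) :
    Set (Module.End ℂ (∀ k : Fin n, D (k : ℕ))) :=
  {g | ∃ (i j l : ℕ) (hi : i < n) (hj : j < n),
    1 ≤ i ∧ i ≤ n - 1 ∧ 1 ≤ j ∧ j ≤ n - 1 ∧ 1 ≤ l ∧ l ≤ min i j ∧
    g = (LinearMap.single ℂ (fun k : Fin n => D (k : ℕ)) ⟨j, hj⟩)
        ∘ₗ ((qTo x q l j) ∘ₗ (pTo xbar p i l))
        ∘ₗ (LinearMap.proj (R := ℂ) (φ := fun k : Fin n => D (k : ℕ)) ⟨i, hi⟩)}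

/-! ### Auxiliary development -/

section Aux

variable (n : ℕ) (c : ℕ → ℂ)
  (x : ∀ i, V i →ₗ[ℂ] V (i + 1)) (xbar : ∀ i, V (i + 1) →ₗ[ℂ] V i)
  (p : ∀ i, D i →ₗ[ℂ] V i) (q : ∀ i, V i →ₗ[ℂ] D i)

/-- Global forward map on `Π k, V k`. -/
def XX : (∀ k, V k) →ₗ[ℂ] (∀ k, V k) where
  toFun f k := match k with
    | 0 => 0
    | m + 1 => x m (f m)
  map_add' f g := funext fun k => by cases k <;> simp
  map_smul' r f := funext fun k => by cases k <;> simp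

/-- Global backward map on `Π k, V k`. -/
def XB : (∀ k, V k) →ₗ[ℂ] (∀ k, V k) where
  toFun f k := xbar k (f (k + 1))
  map_add' f g := funext fun k => by simp
  map_smul' r f := funext fun k => by simp

/-- Global `p` map. -/
def PP : (∀ k : Fin n, D (k : ℕ)) →ₗ[ℂ] (∀ k : ℕ, V k) where
  toFun d k := if h : k < n then p k (d ⟨k, h⟩) else 0
  map_add' d e := funext fun k => by
    by_cases h : k < n
    · simp only [Pi.add_apply, dif_pos h, map_add]
    · simp only [Pi.add_apply, dif_neg h, add_zero]
  map_smul' r d := funext fun k => by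
    by_cases h : k < n
    · simp only [Pi.smul_apply, dif_pos h, map_smul, RingHom.id_apply]
    · simp only [Pi.smul_apply, dif_neg h, smul_zero, RingHom.id_apply]

/-- Global `q` map. -/
def QQ : (∀ k : ℕ, V k) →ₗ[ℂ] (∀ k : Fin n, D (k : ℕ)) where
  toFun f j := q (j : ℕ) (f (j : ℕ))
  map_add' f g := funext fun j => by simp
  map_smul' r f := funext fun j => by simp

/-- Global diagonal scalar map. -/
def CC : (∀ k, V k) →ₗ[ℂ] (∀ k, V k) where
  toFun f k := (if 1 ≤ k ∧ k ≤ n - 1 then c k else 0) • f k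
  map_add' f g := funext fun k => by simp only [Pi.add_apply, smul_add]
  map_smul' r f := funext fun k => by
    simp only [Pi.smul_apply, RingHom.id_apply]
    exact smul_comm _ _ _

@[simp] lemma XX_apply_zero (f : ∀ k, V k) : XX x f 0 = 0 := rfl
@[simp] lemma XX_apply_succ (f : ∀ k, V k) (m : ℕ) : XX x f (m + 1) = x m (f m) := rfl
@[simp] lemma XB_apply (f : ∀ k, V k) (k : ℕ) : XB xbar f k = xbar k (f (k + 1)) := rfl
@[simp] lemma QQ_apply (f : ∀ k, V k) (j : Fin n) : QQ n q f j = q (j : ℕ) (f (j : ℕ)) := rfl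
lemma PP_apply (d : ∀ k : Fin n, D (k : ℕ)) (k : ℕ) :
    PP n p d k = if h : k < n then p k (d ⟨k, h⟩) else 0 := rfl
lemma CC_apply (f : ∀ k, V k) (k : ℕ) :
    CC n c f k = (if 1 ≤ k ∧ k ≤ n - 1 then c k else 0) • f k := rfl

/-- abbreviation for the single inclusion into the product of the `V`s -/
noncomputable abbrev sV (v : ℕ) : V v →ₗ[ℂ] (∀ k, V k) := LinearMap.single ℂ V v

noncomputable abbrev sD (i : Fin n) : D (i : ℕ) →ₗ[ℂ] (∀ k : Fin n, D (k : ℕ)) :=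
  LinearMap.single ℂ (fun k : Fin n => D (k : ℕ)) i

noncomputable abbrev prD (i : Fin n) : (∀ k : Fin n, D (k : ℕ)) →ₗ[ℂ] D (i : ℕ) :=
  LinearMap.proj i

lemma XX_single (v : ℕ) : XX x ∘ₗ sV v = sV (v + 1) ∘ₗ x v := by
  ext u k
  match k with
  | 0 => simp [Pi.single_eq_of_ne (Nat.succ_ne_zero v).symm]
  | m + 1 =>
    by_cases h : m = v
    · subst h; simp
    · simp [Pi.single_eq_of_ne h, Pi.single_eq_of_ne (fun hh => h (Nat.succ_injective hh))]

lemma XB_single_succ (v : ℕ) : XB xbar ∘ₗ sV (v + 1) = sV v ∘ₗ xbar v := by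
  ext u k
  by_cases h : k = v
  · subst h; simp
  · simp [Pi.single_eq_of_ne h, Pi.single_eq_of_ne (fun hh => h (Nat.succ_injective hh))]

lemma XB_single_zero : XB xbar ∘ₗ sV 0 = 0 := by
  ext u k
  simp [Pi.single_eq_of_ne (Nat.succ_ne_zero k)]

lemma QQ_single (v : ℕ) (h : v < n) :
    QQ n q ∘ₗ sV v = sD n ⟨v, h⟩ ∘ₗ q v := by
  ext u j
  obtain ⟨jv, hjv⟩ := j
  by_cases hj : jv = v
  · subst hj
    simp
  · simp only [LinearMap.comp_apply, QQ_apply, LinearMap.coe_single]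
    rw [Pi.single_eq_of_ne hj, Pi.single_eq_of_ne (by simp [Fin.ext_iff, hj]), map_zero]

lemma QQ_single_ge (v : ℕ) (h : n ≤ v) : QQ n q ∘ₗ sV v = 0 := by
  ext u j
  have : (j : ℕ) ≠ v := by omega
  simp only [LinearMap.comp_apply, QQ_apply, LinearMap.coe_single, LinearMap.zero_apply,
    Pi.zero_apply]
  rw [Pi.single_eq_of_ne this, map_zero]

lemma PP_single (i : Fin n) : PP n p ∘ₗ sD n i = sV (i : ℕ) ∘ₗ p (i : ℕ) := by
  ext u k
  simp only [LinearMap.comp_apply, LinearMap.coe_single, PP_apply]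
  by_cases h : k = (i : ℕ)
  · subst h
    rw [dif_pos i.isLt]
    simp
  · rw [Pi.single_eq_of_ne h]
    by_cases hk : k < n
    · rw [dif_pos hk, Pi.single_eq_of_ne (by simp [Fin.ext_iff, h]), map_zero]
    · rw [dif_neg hk]

lemma CC_single (v : ℕ) :
    CC (V := V) n c ∘ₗ sV v = (if 1 ≤ v ∧ v ≤ n - 1 then c v else 0) • sV v := by
  by_cases hv : 1 ≤ v ∧ v ≤ n - 1
  · rw [if_pos hv]
    ext u k
    by_cases h : k = v
    · subst h; simp [CC_apply, hv]
    · simp [CC_apply, Pi.single_eq_of_ne h]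
  · rw [if_neg hv]
    ext u k
    by_cases h : k = v
    · subst h; simp [CC_apply, hv]
    · simp [CC_apply, Pi.single_eq_of_ne h]

lemma prD_comp_sD (i : Fin n) : prD (D := D) n i ∘ₗ sD n i = LinearMap.id := by
  ext u
  simp

lemma id_eq_sum_sD_prD :
    (LinearMap.id : (∀ k : Fin n, D (k : ℕ)) →ₗ[ℂ] ∀ k : Fin n, D (k : ℕ))
      = ∑ i : Fin n, sD n i ∘ₗ prD n i := by
  apply LinearMap.ext
  intro f
  rw [LinearMap.sum_apply]
  simp only [LinearMap.comp_apply, LinearMap.coe_single, LinearMap.proj_apply, LinearMap.id_apply]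
  exact (Finset.univ_sum_single f).symm


lemma XB_comp_XX
    (hx : ∀ i, ¬(1 ≤ i ∧ i + 1 ≤ n - 1) → x i = 0)
    (hp : ∀ i, ¬(1 ≤ i ∧ i ≤ n - 1) → p i = 0)
    (hrel : ∀ i : ℕ, i + 1 ≤ n - 1 →
      (c (i + 1)) • (LinearMap.id : V (i + 1) →ₗ[ℂ] V (i + 1)) + (xbar (i + 1)) ∘ₗ (x (i + 1))
        = (x i) ∘ₗ (xbar i) + (p (i + 1)) ∘ₗ (q (i + 1))) :
    XB xbar ∘ₗ XX x = XX x ∘ₗ XB xbar + PP n p ∘ₗ QQ n q - CC (V := V) n c := by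
  apply LinearMap.ext
  intro f
  funext k
  simp only [LinearMap.add_apply, LinearMap.sub_apply, LinearMap.comp_apply,
    Pi.add_apply, Pi.sub_apply]
  match k with
  | 0 =>
    rw [show XB xbar (XX x f) 0 = xbar 0 (x 0 (f 0)) from rfl, hx 0 (by omega)]
    rw [show XX x (XB xbar f) 0 = 0 from rfl]
    rw [show PP n p (QQ n q f) 0 = if h : 0 < n then p 0 (QQ n q f ⟨0, h⟩) else 0 from rfl]
    rw [hp 0 (by omega), CC_apply]
    simp
  | m + 1 =>
    by_cases h : m + 1 ≤ n - 1
    · have h2 : m + 1 < n := by omega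
      have hr := LinearMap.congr_fun (hrel m h) (f (m + 1))
      simp only [LinearMap.add_apply, LinearMap.comp_apply, LinearMap.smul_apply,
        LinearMap.id_apply] at hr
      rw [show XB xbar (XX x f) (m + 1) = xbar (m + 1) (x (m + 1) (f (m + 1))) from rfl]
      rw [show XX x (XB xbar f) (m + 1) = x m (xbar m (f (m + 1))) from rfl]
      rw [show PP n p (QQ n q f) (m + 1)
            = if h : m + 1 < n then p (m + 1) (QQ n q f ⟨m + 1, h⟩) else 0 from rfl]
      rw [dif_pos h2, CC_apply, if_pos (by omega : 1 ≤ m + 1 ∧ m + 1 ≤ n - 1)]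
      rw [show (QQ n q f ⟨m + 1, h2⟩ : D ((⟨m + 1, h2⟩ : Fin n) : ℕ))
            = q (m + 1) (f (m + 1)) from rfl]
      rw [← hr]
      abel
    · rw [show XB xbar (XX x f) (m + 1) = xbar (m + 1) (x (m + 1) (f (m + 1))) from rfl,
        hx (m + 1) (by omega)]
      rw [show XX x (XB xbar f) (m + 1) = x m (xbar m (f (m + 1))) from rfl,
        hx m (by omega)]
      rw [show PP n p (QQ n q f) (m + 1)
            = if h : m + 1 < n then p (m + 1) (QQ n q f ⟨m + 1, h⟩) else 0 from rfl]
      rw [hp (m + 1) (by omega), CC_apply, if_neg (by omega : ¬(1 ≤ m + 1 ∧ m + 1 ≤ n - 1))]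
      simp


/-- composite of the global maps along a word of directions, head applied first. -/
def wordMap : List Bool → ((∀ k, V k) →ₗ[ℂ] (∀ k, V k))
  | [] => LinearMap.id
  | true :: t => wordMap t ∘ₗ XX x
  | false :: t => wordMap t ∘ₗ XB xbar

lemma wordMap_nil : wordMap x xbar [] = LinearMap.id := rfl
lemma wordMap_cons_true (t : List Bool) :
    wordMap x xbar (true :: t) = wordMap x xbar t ∘ₗ XX x := rfl
lemma wordMap_cons_false (t : List Bool) :
    wordMap x xbar (false :: t) = wordMap x xbar t ∘ₗ XB xbar := rfl

lemma wordMap_append (u v : List Bool) :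
    wordMap x xbar (u ++ v) = wordMap x xbar v ∘ₗ wordMap x xbar u := by
  induction u with
  | nil => simp [wordMap]
  | cons b t ih =>
    cases b
    · rw [List.cons_append, wordMap_cons_false, wordMap_cons_false, ih, LinearMap.comp_assoc]
    · rw [List.cons_append, wordMap_cons_true, wordMap_cons_true, ih, LinearMap.comp_assoc]

/-- number of inversions: pairs `true` before `false`. -/
def invCount : List Bool → ℕ
  | [] => 0
  | true :: t => t.count false + invCount t
  | false :: t => invCount t

lemma invCount_le_cons (b : Bool) (t : List Bool) : invCount t ≤ invCount (b :: t) := by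
  cases b <;> simp [invCount] <;> omega

lemma invCount_sublist {l₁ l₂ : List Bool} (h : l₁.Sublist l₂) :
    invCount l₁ ≤ invCount l₂ := by
  induction h with
  | slnil => exact le_rfl
  | cons b h ih => exact le_trans ih (invCount_le_cons _ _)
  | cons_cons b h ih =>
    cases b
    · simpa [invCount] using ih
    · simp only [invCount]
      exact Nat.add_le_add (h.count_le false) ih

lemma invCount_swap (w1 w2 : List Bool) :
    invCount (w1 ++ true :: false :: w2) = invCount (w1 ++ false :: true :: w2) + 1 := by
  induction w1 with
  | nil => simp [invCount, List.count_cons]; omega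
  | cons b t ih =>
    cases b
    · simpa [invCount] using ih
    · have hc : List.count false (t ++ true :: false :: w2)
          = List.count false (t ++ false :: true :: w2) := by
        simp [List.count_append, List.count_cons]
      simp only [List.cons_append, invCount]
      show List.count false (t ++ true :: false :: w2) + invCount (t ++ true :: false :: w2)
          = List.count false (t ++ false :: true :: w2) + invCount (t ++ false :: true :: w2) + 1
      omega

/-- every word is either descending-then-ascending or contains an adjacent peak. -/
lemma splitBool : ∀ w : List Bool,
    (∃ b a, w = List.replicate b false ++ List.replicate a true) ∨
    (∃ w1 w2, w = w1 ++ true :: false :: w2) := by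
  intro w
  induction w with
  | nil => exact Or.inl ⟨0, 0, rfl⟩
  | cons b t ih =>
    rcases ih with ⟨bb, aa, rfl⟩ | ⟨w1, w2, rfl⟩
    · cases b
      · exact Or.inl ⟨bb + 1, aa, by simp [List.replicate_succ]⟩
      · match bb with
        | 0 => exact Or.inl ⟨0, aa + 1, by simp [List.replicate_succ]⟩
        | bb + 1 =>
          refine Or.inr ⟨[], List.replicate bb false ++ List.replicate aa true, ?_⟩
          simp [List.replicate_succ]
    · exact Or.inr ⟨b :: w1, w2, rfl⟩

/-- support lemma: a word applied to a single block lands in a single block. -/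
lemma wordMap_single_exists (w : List Bool) : ∀ v : ℕ,
    ∃ (v' : ℕ) (g : V v →ₗ[ℂ] V v'), wordMap x xbar w ∘ₗ sV v = sV v' ∘ₗ g := by
  induction w with
  | nil => exact fun v => ⟨v, LinearMap.id, by simp [wordMap]⟩
  | cons b t ih =>
    intro v
    cases b
    · match v with
      | 0 =>
        refine ⟨0, 0, ?_⟩
        rw [wordMap_cons_false, LinearMap.comp_assoc, XB_single_zero]
        simp
      | v + 1 =>
        obtain ⟨v', g, hg⟩ := ih v
        refine ⟨v', g ∘ₗ xbar v, ?_⟩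
        rw [wordMap_cons_false, LinearMap.comp_assoc, XB_single_succ,
          ← LinearMap.comp_assoc, hg, LinearMap.comp_assoc]
    · obtain ⟨v', g, hg⟩ := ih (v + 1)
      refine ⟨v', g ∘ₗ x v, ?_⟩
      rw [wordMap_cons_true, LinearMap.comp_assoc, XX_single,
        ← LinearMap.comp_assoc, hg, LinearMap.comp_assoc]


lemma xPath_self (l : ℕ) : xPath x l l = LinearMap.id := by
  match l with
  | 0 => rw [xPath, dif_pos rfl]
  | m + 1 => rw [xPath, dif_pos rfl]

lemma xbarPath_self (l : ℕ) : xbarPath xbar l l = LinearMap.id := by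
  match l with
  | 0 => rw [xbarPath, dif_pos rfl]; rfl
  | m + 1 => rw [xbarPath, dif_pos rfl]; rfl

lemma xPath_shift (l : ℕ) : ∀ j : ℕ, l < j →
    xPath x l j = xPath x (l + 1) j ∘ₗ x l := by
  intro j
  induction j with
  | zero => omega
  | succ m ih =>
    intro hlm
    rcases Nat.lt_or_ge l m with h | h
    · rw [xPath, dif_neg (by omega : ¬ l = m + 1), ih h,
        show xPath x (l + 1) (m + 1) = if h : l + 1 = m + 1 then h ▸ LinearMap.id
          else x m ∘ₗ xPath x (l + 1) m from rfl,
        dif_neg (by omega : ¬ l + 1 = m + 1), LinearMap.comp_assoc]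
    · have hl : l = m := by omega
      subst hl
      rw [xPath, dif_neg (by omega : ¬ l = l + 1), xPath_self, xPath_self]
      simp

lemma xbarPath_peel (l m : ℕ) (h : l ≤ m) :
    xbarPath xbar l (m + 1) = xbarPath xbar l m ∘ₗ xbar m := by
  rw [xbarPath, dif_neg (by omega : ¬ l = m + 1)]

lemma xPath_zero_of (hx0 : x 0 = 0) : ∀ j, 1 ≤ j → xPath x 0 j = 0 := by
  intro j
  induction j with
  | zero => omega
  | succ m ih =>
    intro _
    rw [xPath, dif_neg (by omega : ¬ (0 : ℕ) = m + 1)]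
    match m, ih with
    | 0, _ => rw [xPath_self, hx0]; simp
    | m + 1, ih => rw [ih (by omega)]; simp

lemma wordMap_T : ∀ (a l j : ℕ), j = l + a →
    wordMap x xbar (List.replicate a true) ∘ₗ sV l = sV j ∘ₗ xPath x l j := by
  intro a
  induction a with
  | zero =>
    intro l j h
    have h' : j = l := by omega
    subst h'
    rw [List.replicate_zero, wordMap_nil, xPath_self]
    simp
  | succ a ih =>
    intro l j h
    rw [List.replicate_succ, wordMap_cons_true, LinearMap.comp_assoc, XX_single,
      ← LinearMap.comp_assoc, ih (l + 1) j (by omega), LinearMap.comp_assoc,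
      ← xPath_shift x l j (by omega)]

lemma wordMap_F : ∀ (b l i : ℕ), i = l + b →
    wordMap x xbar (List.replicate b false) ∘ₗ sV i = sV l ∘ₗ xbarPath xbar l i := by
  intro b
  induction b with
  | zero =>
    intro l i h
    have h' : i = l := by omega
    subst h'
    rw [List.replicate_zero, wordMap_nil, xbarPath_self]
    simp
  | succ b ih =>
    intro l i h
    match i, h with
    | m + 1, h =>
      rw [List.replicate_succ, wordMap_cons_false, LinearMap.comp_assoc, XB_single_succ,
        ← LinearMap.comp_assoc, ih l m (by omega), LinearMap.comp_assoc,
        ← xbarPath_peel xbar l m (by omega)]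

lemma wordMap_F_zero : ∀ (b i : ℕ), i < b →
    wordMap x xbar (List.replicate b false) ∘ₗ sV i = 0 := by
  intro b
  induction b with
  | zero => omega
  | succ b ih =>
    intro i hi
    match i with
    | 0 =>
      rw [List.replicate_succ, wordMap_cons_false, LinearMap.comp_assoc, XB_single_zero]
      simp
    | m + 1 =>
      rw [List.replicate_succ, wordMap_cons_false, LinearMap.comp_assoc, XB_single_succ,
        ← LinearMap.comp_assoc, ih m (by omega)]
      simp


/-- the component of `Q ∘ (word) ∘ P` starting at block `i`. -/
noncomputable def NN (w : List Bool) (i : Fin n) :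
    Module.End ℂ (∀ k : Fin n, D (k : ℕ)) :=
  QQ n q ∘ₗ wordMap x xbar w ∘ₗ PP n p ∘ₗ sD n i ∘ₗ prD n i

lemma NN_base (b a : ℕ) (i : Fin n) (l j : ℕ) (hl : (i : ℕ) = l + b) (hj : j = l + a) :
    NN n x xbar p q (List.replicate b false ++ List.replicate a true) i
      = (QQ n q ∘ₗ sV j) ∘ₗ (xPath x l j ∘ₗ (xbarPath xbar l (i : ℕ)
          ∘ₗ (p (i : ℕ) ∘ₗ prD n i))) := by
  apply LinearMap.ext
  intro d
  have h1 := LinearMap.congr_fun (PP_single n p i) (prD n i d)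
  have h2 := LinearMap.congr_fun
    (wordMap_append x xbar (List.replicate b false) (List.replicate a true))
    (PP n p (sD n i (prD n i d)))
  have h3 := LinearMap.congr_fun (wordMap_F x xbar b l (i : ℕ) hl) (p (i : ℕ) (prD n i d))
  have h4 := LinearMap.congr_fun (wordMap_T x xbar a l j hj)
    (xbarPath xbar l (i : ℕ) (p (i : ℕ) (prD n i d)))
  simp only [LinearMap.comp_apply] at h1 h2 h3 h4 ⊢
  rw [NN]
  simp only [LinearMap.comp_apply]
  rw [h2, h1, h3, h4]

lemma NN_zero_of_lt (b a : ℕ) (i : Fin n) (hib : (i : ℕ) < b) :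
    NN n x xbar p q (List.replicate b false ++ List.replicate a true) i = 0 := by
  apply LinearMap.ext
  intro d
  have h1 := LinearMap.congr_fun (PP_single n p i) (prD n i d)
  have h2 := LinearMap.congr_fun
    (wordMap_append x xbar (List.replicate b false) (List.replicate a true))
    (PP n p (sD n i (prD n i d)))
  have h3 := LinearMap.congr_fun (wordMap_F_zero x xbar b (i : ℕ) hib)
    (p (i : ℕ) (prD n i d))
  simp only [LinearMap.comp_apply, LinearMap.zero_apply] at h1 h2 h3 ⊢
  rw [NN]
  simp only [LinearMap.comp_apply]
  rw [h2, h1, h3, map_zero, map_zero]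

lemma baseMem (hn : 2 ≤ n) (hx0 : x 0 = 0) (hq0 : q 0 = 0) (b a : ℕ) (i : Fin n) :
    NN n x xbar p q (List.replicate b false ++ List.replicate a true) i
      ∈ NonUnitalAlgebra.adjoin ℂ (qpGens n x xbar p q) := by
  rcases Nat.lt_or_ge (i : ℕ) b with hib | hib
  · rw [NN_zero_of_lt n x xbar p q b a i hib]
    exact zero_mem _
  · obtain ⟨l, hl⟩ : ∃ l, (i : ℕ) = l + b := ⟨(i : ℕ) - b, by omega⟩
    rw [NN_base n x xbar p q b a i l (l + a) hl rfl]
    rcases Nat.lt_or_ge (l + a) n with hjn | hjn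
    · -- j < n
      rw [QQ_single n q (l + a) hjn]
      match l with
      | 0 =>
        match a with
        | 0 =>
          rw [show q (0 + 0) = 0 from hq0]
          simp only [LinearMap.comp_zero, LinearMap.zero_comp]
          exact zero_mem _
        | a + 1 =>
          rw [show xPath x 0 (0 + (a + 1)) = 0 from
            xPath_zero_of x hx0 (0 + (a + 1)) (by omega)]
          simp only [LinearMap.comp_zero, LinearMap.zero_comp]
          exact zero_mem _
      | l + 1 =>
        apply NonUnitalAlgebra.subset_adjoin ℂ
        refine ⟨(i : ℕ), l + 1 + a, l + 1, i.isLt, hjn, by omega, by omega, by omega,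
          by omega, by omega, by omega, ?_⟩
        rw [qTo, pTo]
        simp only [LinearMap.comp_assoc]
    · -- j ≥ n : the `q` side vanishes
      rw [QQ_single_ge n q (l + a) hjn]
      simp only [LinearMap.zero_comp]
      exact zero_mem _


lemma sum_NN_eq (w2 : List Bool) :
    QQ n q ∘ₗ wordMap x xbar w2 ∘ₗ PP n p = ∑ i' : Fin n, NN n x xbar p q w2 i' := by
  apply LinearMap.ext
  intro d
  rw [LinearMap.sum_apply]
  simp only [NN, LinearMap.comp_apply]
  rw [← map_sum, ← map_sum, ← map_sum]
  simp only [LinearMap.coe_single, LinearMap.proj_apply]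
  rw [Finset.univ_sum_single d]

lemma NN_peak (hx : ∀ i, ¬(1 ≤ i ∧ i + 1 ≤ n - 1) → x i = 0)
    (hp : ∀ i, ¬(1 ≤ i ∧ i ≤ n - 1) → p i = 0)
    (hrel : ∀ i : ℕ, i + 1 ≤ n - 1 →
      (c (i + 1)) • (LinearMap.id : V (i + 1) →ₗ[ℂ] V (i + 1)) + (xbar (i + 1)) ∘ₗ (x (i + 1))
        = (x i) ∘ₗ (xbar i) + (p (i + 1)) ∘ₗ (q (i + 1)))
    (w1 w2 : List Bool) (i : Fin n) :
    NN n x xbar p q (w1 ++ true :: false :: w2) i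
      = NN n x xbar p q (w1 ++ false :: true :: w2) i
        + (QQ n q ∘ₗ wordMap x xbar w2 ∘ₗ PP n p) ∘ₗ NN n x xbar p q w1 i
        - QQ n q ∘ₗ wordMap x xbar w2 ∘ₗ CC n c ∘ₗ wordMap x xbar w1 ∘ₗ PP n p
            ∘ₗ sD n i ∘ₗ prD n i := by
  have hrel2 : ∀ z : ∀ k : ℕ, V k,
      XB xbar (XX x z) = XX x (XB xbar z) + PP n p (QQ n q z) - CC n c z := by
    intro z
    have := LinearMap.congr_fun (XB_comp_XX n c x xbar p q hx hp hrel) z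
    simpa using this
  apply LinearMap.ext
  intro d
  have h2 := LinearMap.congr_fun
    (wordMap_append x xbar w1 (true :: false :: w2)) (PP n p (sD n i (prD n i d)))
  have h2' := LinearMap.congr_fun
    (wordMap_append x xbar w1 (false :: true :: w2)) (PP n p (sD n i (prD n i d)))
  simp only [LinearMap.comp_apply] at h2 h2'
  simp only [NN, LinearMap.comp_apply, LinearMap.add_apply, LinearMap.sub_apply]
  rw [h2, h2', wordMap_cons_true, wordMap_cons_false]
  simp only [LinearMap.comp_apply]
  rw [wordMap_cons_false, wordMap_cons_true]
  simp only [LinearMap.comp_apply]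
  rw [hrel2]
  simp only [map_add, map_sub]

lemma NN_scalar (w1 w2 : List Bool) (i : Fin n) (v : ℕ) (g : V (i : ℕ) →ₗ[ℂ] V v)
    (hg : wordMap x xbar w1 ∘ₗ sV (i : ℕ) = sV v ∘ₗ g) :
    QQ n q ∘ₗ wordMap x xbar w2 ∘ₗ CC n c ∘ₗ wordMap x xbar w1 ∘ₗ PP n p
        ∘ₗ sD n i ∘ₗ prD n i
      = (if 1 ≤ v ∧ v ≤ n - 1 then c v else 0) • NN n x xbar p q (w1 ++ w2) i := by
  apply LinearMap.ext
  intro d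
  have h1 := LinearMap.congr_fun (PP_single n p i) (prD n i d)
  have hgp := LinearMap.congr_fun hg (p (i : ℕ) (prD n i d))
  have hcc := LinearMap.congr_fun (CC_single n c v) (g (p (i : ℕ) (prD n i d)))
  have h2 := LinearMap.congr_fun
    (wordMap_append x xbar w1 w2) (PP n p (sD n i (prD n i d)))
  simp only [LinearMap.comp_apply, LinearMap.smul_apply] at h1 hgp hcc h2
  simp only [NN, LinearMap.comp_apply, LinearMap.smul_apply]
  rw [h2, h1, hgp, hcc]
  simp only [map_smul]

lemma mainMem (hn : 2 ≤ n)
    (hx : ∀ i, ¬(1 ≤ i ∧ i + 1 ≤ n - 1) → x i = 0)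
    (hp : ∀ i, ¬(1 ≤ i ∧ i ≤ n - 1) → p i = 0)
    (hq : ∀ i, ¬(1 ≤ i ∧ i ≤ n - 1) → q i = 0)
    (hrel : ∀ i : ℕ, i + 1 ≤ n - 1 →
      (c (i + 1)) • (LinearMap.id : V (i + 1) →ₗ[ℂ] V (i + 1)) + (xbar (i + 1)) ∘ₗ (x (i + 1))
        = (x i) ∘ₗ (xbar i) + (p (i + 1)) ∘ₗ (q (i + 1))) :
    ∀ (m : ℕ) (w : List Bool), w.length + invCount w ≤ m → ∀ i : Fin n,
      NN n x xbar p q w i ∈ NonUnitalAlgebra.adjoin ℂ (qpGens n x xbar p q) := by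
  have hx0 : x 0 = 0 := hx 0 (by omega)
  have hq0 : q 0 = 0 := hq 0 (by omega)
  intro m
  induction m with
  | zero =>
    intro w hw i
    have : w = [] := List.length_eq_zero_iff.mp (by omega)
    subst this
    exact baseMem n x xbar p q hn hx0 hq0 0 0 i
  | succ m ih =>
    intro w hw i
    rcases splitBool w with ⟨b, a, rfl⟩ | ⟨w1, w2, rfl⟩
    · exact baseMem n x xbar p q hn hx0 hq0 b a i
    · -- measure bookkeeping
      have hswap := invCount_swap w1 w2
      have hsubTF : w2.Sublist (true :: false :: w2) :=
        (List.sublist_cons_self false w2).trans (List.sublist_cons_self true (false :: w2))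
      have hsub2 : w2.Sublist (w1 ++ true :: false :: w2) :=
        hsubTF.trans (List.sublist_append_right w1 _)
      have hsub1 : w1.Sublist (w1 ++ true :: false :: w2) := List.sublist_append_left w1 _
      have hsub12 : (w1 ++ w2).Sublist (w1 ++ true :: false :: w2) :=
        hsubTF.append_left w1
      have hi2 := invCount_sublist hsub2
      have hi1 := invCount_sublist hsub1
      have hi12 := invCount_sublist hsub12
      have hL1 : (w1 ++ true :: false :: w2).length = w1.length + w2.length + 2 := by
        simp only [List.length_append, List.length_cons]
        omega
      have hL2 : (w1 ++ false :: true :: w2).length = w1.length + w2.length + 2 := by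
        simp only [List.length_append, List.length_cons]
        omega
      have hL3 : (w1 ++ w2).length = w1.length + w2.length := by
        simp only [List.length_append]
      obtain ⟨v, g, hg⟩ := wordMap_single_exists x xbar w1 (i : ℕ)
      rw [NN_peak n c x xbar p q hx hp hrel w1 w2 i,
        NN_scalar n c x xbar p q w1 w2 i v g hg,
        sum_NN_eq n x xbar p q w2, ← Module.End.mul_eq_comp, Finset.sum_mul]
      refine sub_mem (add_mem ?_ ?_) ?_
      · exact ih (w1 ++ false :: true :: w2) (by omega) i
      · exact sum_mem fun i' _ => mul_mem (ih w2 (by omega) i') (ih w1 (by omega) i)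
      · exact SMulMemClass.smul_mem _ (ih (w1 ++ w2) (by omega) i)


lemma homOfEq_self {i : ℕ} (h : i = i) : homOfEq (V := V) h = LinearMap.id := by
  have : h = rfl := Subsingleton.elim _ _
  rw [this]
  rfl

lemma pathComp_cons (aa : ℕ × Bool) (L : List (ℕ × Bool)) (v : ℕ) (h : asrc aa = v) :
    pathComp x xbar (aa :: L) v
      = pathComp x xbar L (atgt aa) ∘ₗ (step x xbar aa ∘ₗ homOfEq h.symm) := by
  rw [pathComp, dif_pos h]
  rfl

lemma wordMap_pathComp : ∀ (L : List (ℕ × Bool)) (v : ℕ),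
    (∀ b ∈ L.head?, asrc b = v) → List.Chain' (fun s t => atgt s = asrc t) L →
    wordMap x xbar (L.map Prod.snd) ∘ₗ sV v
      = sV (endVertex L v) ∘ₗ pathComp x xbar L v := by
  intro L
  induction L with
  | nil =>
    intro v _ _
    simp [wordMap, endVertex, pathComp]
    exact (LinearMap.comp_id _).symm
  | cons aa L ihL =>
    intro v hhead hchain
    have hsrc : asrc aa = v := hhead aa rfl
    obtain ⟨hc1, hc2⟩ := List.isChain_cons.mp hchain
    rw [pathComp_cons x xbar aa L v hsrc]
    obtain ⟨m, dir⟩ := aa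
    cases dir
    · -- backward arrow `x̄_m : V_{m+1} → V_m`
      have hv : m + 1 = v := hsrc
      subst hv
      have hih := ihL m (fun b hb => (hc1 b hb).symm) hc2
      show wordMap x xbar (false :: List.map Prod.snd L) ∘ₗ sV (m + 1)
          = sV (endVertex L m) ∘ₗ (pathComp x xbar L m ∘ₗ (xbar m ∘ₗ LinearMap.id))
      rw [LinearMap.comp_id, wordMap_cons_false, LinearMap.comp_assoc, XB_single_succ,
        ← LinearMap.comp_assoc, hih, LinearMap.comp_assoc]
    · -- forward arrow `x_m : V_m → V_{m+1}`
      have hv : m = v := hsrc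
      subst hv
      have hih := ihL (m + 1) (fun b hb => (hc1 b hb).symm) hc2
      show wordMap x xbar (true :: List.map Prod.snd L) ∘ₗ sV m
          = sV (endVertex L (m + 1)) ∘ₗ (pathComp x xbar L (m + 1) ∘ₗ (x m ∘ₗ LinearMap.id))
      rw [LinearMap.comp_id, wordMap_cons_true, LinearMap.comp_assoc, XX_single,
        ← LinearMap.comp_assoc, hih, LinearMap.comp_assoc]


end Aux

theorem stmt2' (n : ℕ) (hn : 2 ≤ n)
    (c : ℕ → ℂ)
    (x : ∀ i, V i →ₗ[ℂ] V (i + 1)) (xbar : ∀ i, V (i + 1) →ₗ[ℂ] V i)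
    (p : ∀ i, D i →ₗ[ℂ] V i) (q : ∀ i, V i →ₗ[ℂ] D i)
    (hx : ∀ i, ¬(1 ≤ i ∧ i + 1 ≤ n - 1) → x i = 0)
    (hxbar : ∀ i, ¬(1 ≤ i ∧ i + 1 ≤ n - 1) → xbar i = 0)
    (hp : ∀ i, ¬(1 ≤ i ∧ i ≤ n - 1) → p i = 0)
    (hq : ∀ i, ¬(1 ≤ i ∧ i ≤ n - 1) → q i = 0)
    (hrel : ∀ i : ℕ, i + 1 ≤ n - 1 →
      (c (i + 1)) • (LinearMap.id : V (i + 1) →ₗ[ℂ] V (i + 1)) + (xbar (i + 1)) ∘ₗ (x (i + 1))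
        = (x i) ∘ₗ (xbar i) + (p (i + 1)) ∘ₗ (q (i + 1)))
    (a : ℕ × Bool) (L' : List (ℕ × Bool))
    (hchain : List.Chain' (fun s t => atgt s = asrc t) (a :: L'))
    (hsrc : asrc a < n)
    (htgt : atgt ((a :: L').getLast (List.cons_ne_nil a L')) < n)
    (hw : endVertex (a :: L') (asrc a) = atgt ((a :: L').getLast (List.cons_ne_nil a L'))) :
    ∃ P ∈ NonUnitalAlgebra.adjoin ℂ (qpGens n x xbar p q),
      q (atgt ((a :: L').getLast (List.cons_ne_nil a L')))
          ∘ₗ homOfEq hw ∘ₗ pathComp x xbar (a :: L') (asrc a) ∘ₗ p (asrc a)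
        = (LinearMap.proj (R := ℂ) (φ := fun k : Fin n => D (k : ℕ))
              ⟨atgt ((a :: L').getLast (List.cons_ne_nil a L')), htgt⟩)
            ∘ₗ P
            ∘ₗ (LinearMap.single ℂ (fun k : Fin n => D (k : ℕ)) ⟨asrc a, hsrc⟩) := by
  refine ⟨NN n x xbar p q (List.map Prod.snd (a :: L')) ⟨asrc a, hsrc⟩,
    mainMem n c x xbar p q hn hx hp hq hrel
      ((List.map Prod.snd (a :: L')).length + invCount (List.map Prod.snd (a :: L')))
      (List.map Prod.snd (a :: L')) le_rfl ⟨asrc a, hsrc⟩, ?_⟩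
  have hhead : ∀ b ∈ (a :: L').head?, asrc b = asrc a := by
    intro b hb
    simp only [List.head?_cons, Option.mem_def, Option.some.injEq] at hb
    rw [hb]
  have hB := wordMap_pathComp x xbar (a :: L') (asrc a) hhead hchain
  revert htgt hw
  generalize atgt ((a :: L').getLast (List.cons_ne_nil a L')) = jv
  intro htgt hw
  subst hw
  rw [homOfEq_self]
  apply LinearMap.ext
  intro u
  have e2 := LinearMap.congr_fun (PP_single n p ⟨asrc a, hsrc⟩) u
  have e3 := LinearMap.congr_fun hB (p (asrc a) u)
  have e1 : prD n ⟨asrc a, hsrc⟩ (sD n ⟨asrc a, hsrc⟩ u) = u := by simp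
  simp only [LinearMap.comp_apply, LinearMap.id_apply] at e2 e3 ⊢
  simp only [NN, LinearMap.comp_apply]
  rw [e1, e2, e3]
  simp [Pi.single_eq_same]

/-- for `(x, x̄, p, q) ∈ Λ^c(v,d)` and a path `h_1, …, h_r` in the doubled
quiver with source vertex `i′` of `h_1` and target vertex `j′` of `h_r`, there is an
element `P` of the non-unital subalgebra of `End(D_1 ⊕ ⋯ ⊕ D_{n−1})` generated by the
(zero-extended) maps `q_{l→j} p_{i→l}` such that
`q_{j′} ∘ x_{h_r} ∘ ⋯ ∘ x_{h_1} ∘ p_{i′} : D_{i′} → D_{j′}` equals the `(i′, j′)`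
component of `P`.

The quadruple is encoded by total families of maps vanishing outside the index ranges of
the `A_{n-1}` quiver, the relations of `Λ^c(v,d)` being the family
`c_{i+1}·Id + x̄_{i+1} x_{i+1} = x_i x̄_i + p_{i+1} q_{i+1}` (out-of-range terms zero).
The path is the nonempty list `a :: L'` of arrows. -/
theorem stmt2 (n : ℕ) (hn : 2 ≤ n)
    [∀ i, FiniteDimensional ℂ (V i)] [∀ i, FiniteDimensional ℂ (D i)]
    (c : ℕ → ℂ)
    (x : ∀ i, V i →ₗ[ℂ] V (i + 1)) (xbar : ∀ i, V (i + 1) →ₗ[ℂ] V i)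
    (p : ∀ i, D i →ₗ[ℂ] V i) (q : ∀ i, V i →ₗ[ℂ] D i)
    (hx : ∀ i, ¬(1 ≤ i ∧ i + 1 ≤ n - 1) → x i = 0)
    (hxbar : ∀ i, ¬(1 ≤ i ∧ i + 1 ≤ n - 1) → xbar i = 0)
    (hp : ∀ i, ¬(1 ≤ i ∧ i ≤ n - 1) → p i = 0)
    (hq : ∀ i, ¬(1 ≤ i ∧ i ≤ n - 1) → q i = 0)
    (hrel : ∀ i : ℕ, i + 1 ≤ n - 1 →
      (c (i + 1)) • (LinearMap.id : V (i + 1) →ₗ[ℂ] V (i + 1)) + (xbar (i + 1)) ∘ₗ (x (i + 1))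
        = (x i) ∘ₗ (xbar i) + (p (i + 1)) ∘ₗ (q (i + 1)))
    (a : ℕ × Bool) (L' : List (ℕ × Bool))
    (hvalid : ∀ b ∈ a :: L', 1 ≤ b.1 ∧ b.1 + 1 ≤ n - 1)
    (hchain : List.Chain' (fun s t => atgt s = asrc t) (a :: L'))
    (hsrc : asrc a < n)
    (htgt : atgt ((a :: L').getLast (List.cons_ne_nil a L')) < n)
    (hw : endVertex (a :: L') (asrc a) = atgt ((a :: L').getLast (List.cons_ne_nil a L'))) :
    ∃ P ∈ NonUnitalAlgebra.adjoin ℂ (qpGens n x xbar p q),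
      q (atgt ((a :: L').getLast (List.cons_ne_nil a L')))
          ∘ₗ homOfEq hw ∘ₗ pathComp x xbar (a :: L') (asrc a) ∘ₗ p (asrc a)
        = (LinearMap.proj (R := ℂ) (φ := fun k : Fin n => D (k : ℕ))
              ⟨atgt ((a :: L').getLast (List.cons_ne_nil a L')), htgt⟩)
            ∘ₗ P
            ∘ₗ (LinearMap.single ℂ (fun k : Fin n => D (k : ℕ)) ⟨asrc a, hsrc⟩) := by
  exact stmt2' n hn c x xbar p q hx hxbar hp hq hrel a L' hchain hsrc htgt hw

end QuiverA
end

section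
/- Let e, h ∈ 𝔤 with h diagonalizable with integer eigenvalues and [h, e] = 2e. For s ∈ ℂ^× let ι(s) ∈ GL(N, ℂ) be the invertible operator acting as multiplication by s^k on the k-eigenspace of h, and define s ∗ x := s^{−2} ι(s) x ι(s)^{−1} for x ∈ 𝔤. Let C ⊆ 𝔤 be a subspace with [h, C] ⊆ C which is contained in the sum of the eigenspaces of ad h = [h, −] with eigenvalues ≤ 1, and such that 𝔤 = [𝔤, e] ⊕ C, where [𝔤, e] = {ge − eg : g ∈ 𝔤}. Then: (i) s ∗ e = e for all s ∈ ℂ^×; (ii) s ∗ (e + v) ∈ e + C for every v ∈ C and s ∈ ℂ^×; and (iii) for every v ∈ C, s ∗ (e + v) → e as the real parameter s → +∞. -/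
open Filter

/-- Conjugation by `ι s` scales an `ad h`-eigenvector with integer eigenvalue `m` by `s ^ m`. -/
private lemma stmt4_aux_conj {N : ℕ} (h : Matrix (Fin N) (Fin N) ℂ)
    (hdiag : ⨆ k : ℤ, Module.End.eigenspace (Matrix.mulVecLin h) (k : ℂ) = ⊤)
    (ι : ℂˣ → (Matrix (Fin N) (Fin N) ℂ)ˣ)
    (hι : ∀ (s : ℂˣ) (k : ℤ) (v : Fin N → ℂ),
      h.mulVec v = (k : ℂ) • v → (ι s).val.mulVec v = ((s : ℂ) ^ k) • v)
    (s : ℂˣ) (x : Matrix (Fin N) (Fin N) ℂ) (m : ℤ)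
    (hx : h * x - x * h = ((m : ℤ) : ℂ) • x) :
    (ι s).val * x * ((ι s)⁻¹).val = ((s : ℂ) ^ m) • x := by
  have hs0 : (s : ℂ) ≠ 0 := Units.ne_zero s
  have hmain : (ι s).val * x = ((s : ℂ) ^ m) • (x * (ι s).val) := by
    have key : ∀ v : Fin N → ℂ, ((ι s).val * x).mulVec v
        = (((s : ℂ) ^ m) • (x * (ι s).val)).mulVec v := by
      intro v
      have hv : v ∈ (⊤ : Submodule ℂ (Fin N → ℂ)) := trivial
      rw [← hdiag] at hv
      set D : (Fin N → ℂ) →ₗ[ℂ] (Fin N → ℂ) :=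
        Matrix.mulVecLin ((ι s).val * x)
          - Matrix.mulVecLin (((s : ℂ) ^ m) • (x * (ι s).val)) with hD
      have hker : (⨆ k : ℤ, Module.End.eigenspace (Matrix.mulVecLin h) ((k : ℤ) : ℂ))
          ≤ LinearMap.ker D := by
        refine iSup_le fun k w hw => ?_
        rw [Module.End.mem_eigenspace_iff] at hw
        have hw' : h.mulVec w = ((k : ℤ) : ℂ) • w := by simpa using hw
        have step1 : h.mulVec (x.mulVec w) = (((k + m : ℤ)) : ℂ) • x.mulVec w := by
          have hxw := congrArg (fun M : Matrix (Fin N) (Fin N) ℂ => M.mulVec w) hx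
          simp only [Matrix.sub_mulVec, Matrix.smul_mulVec] at hxw
          rw [← Matrix.mulVec_mulVec, ← Matrix.mulVec_mulVec, hw',
            Matrix.mulVec_smul] at hxw
          have h3 := sub_eq_iff_eq_add.mp hxw
          rw [h3]
          push_cast
          rw [add_smul]
          abel
        have step2 := hι s (k + m) (x.mulVec w) step1
        have lhs : ((ι s).val * x).mulVec w = ((s : ℂ) ^ (k + m)) • x.mulVec w := by
          rw [← Matrix.mulVec_mulVec]; exact step2
        have rhs : (((s : ℂ) ^ m) • (x * (ι s).val)).mulVec w
            = ((s : ℂ) ^ (k + m)) • x.mulVec w := by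
          rw [Matrix.smul_mulVec, ← Matrix.mulVec_mulVec, hι s k w hw',
            Matrix.mulVec_smul, smul_smul, ← zpow_add₀ hs0, add_comm m k]
        simp only [LinearMap.mem_ker, hD, LinearMap.sub_apply, Matrix.mulVecLin_apply,
          lhs, rhs, sub_self]
      have hDv : D v = 0 := hker hv
      simpa [hD, sub_eq_zero, Matrix.mulVecLin_apply, Matrix.smul_mulVec] using hDv
    ext i j
    simpa [Matrix.mulVec_single_one] using congrFun (key (Pi.single j 1)) i
  calc (ι s).val * x * ((ι s)⁻¹).val
      = ((s : ℂ) ^ m) • (x * ((ι s).val * ((ι s)⁻¹).val)) := by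
        rw [hmain, smul_mul_assoc, mul_assoc]
    _ = ((s : ℂ) ^ m) • x := by rw [Units.mul_inv, mul_one]

/-- Let `𝔤 = 𝔤𝔩(N, ℂ)`, `e, h ∈ 𝔤` with `h` diagonalizable with integer
eigenvalues and `[h, e] = 2e`.  For `s ∈ ℂˣ` let `ι(s)` be the invertible operator acting
as multiplication by `s^k` on the `k`-eigenspace of `h`, and `s ∗ x = s^{−2} ι(s) x ι(s)^{−1}`.
Let `C ⊆ 𝔤` be a subspace with `[h, C] ⊆ C` contained in the sum of eigenspaces of `ad h`
with eigenvalues `≤ 1`, with `𝔤 = [𝔤, e] ⊕ C`.  Then (i) `s ∗ e = e`;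
(ii) `s ∗ (e + v) ∈ e + C` for `v ∈ C`; (iii) `s ∗ (e + v) → e` as the real parameter
`s → +∞`. -/
theorem stmt4 (N : ℕ) (hN : 1 ≤ N)
    (e h : Matrix (Fin N) (Fin N) ℂ)
    (hdiag : ⨆ k : ℤ, Module.End.eigenspace (Matrix.mulVecLin h) (k : ℂ) = ⊤)
    (hbracket : h * e - e * h = (2 : ℂ) • e)
    (ι : ℂˣ → (Matrix (Fin N) (Fin N) ℂ)ˣ)
    (hι : ∀ (s : ℂˣ) (k : ℤ) (v : Fin N → ℂ),
      h.mulVec v = (k : ℂ) • v → (ι s).val.mulVec v = ((s : ℂ) ^ k) • v)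
    (C : Submodule ℂ (Matrix (Fin N) (Fin N) ℂ))
    (hC1 : ∀ c ∈ C, h * c - c * h ∈ C)
    (hC2 : C ≤ ⨆ k : ℤ, ⨆ _ : k ≤ 1,
      Module.End.eigenspace
        (LinearMap.mulLeft ℂ h - LinearMap.mulRight ℂ h) (k : ℂ))
    (hcompl : IsCompl
      (LinearMap.range (LinearMap.mulRight ℂ e - LinearMap.mulLeft ℂ e)) C) :
    (∀ s : ℂˣ, ((s : ℂ) ^ (-2 : ℤ)) • ((ι s).val * e * ((ι s)⁻¹).val) = e) ∧
    (∀ v ∈ C, ∀ s : ℂˣ,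
      ((s : ℂ) ^ (-2 : ℤ)) • ((ι s).val * (e + v) * ((ι s)⁻¹).val) - e ∈ C) ∧
    (∀ v ∈ C, Filter.Tendsto
      (fun s : ℝ => if hs : (s : ℂ) = 0 then e else
        (((s : ℂ)) ^ (-2 : ℤ)) • ((ι (Units.mk0 (s : ℂ) hs)).val * (e + v)
          * ((ι (Units.mk0 (s : ℂ) hs))⁻¹).val))
      Filter.atTop (nhds e)) := by
  -- the operator `ad h`
  set T : Module.End ℂ (Matrix (Fin N) (Fin N) ℂ) :=
    LinearMap.mulLeft ℂ h - LinearMap.mulRight ℂ h with hT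
  have hTapp : ∀ x, T x = h * x - x * h := fun x => rfl
  -- part (i)
  have hbr2 : h * e - e * h = (((2 : ℤ)) : ℂ) • e := by exact_mod_cast hbracket
  have part1 : ∀ s : ℂˣ, ((s : ℂ) ^ (-2 : ℤ)) • ((ι s).val * e * ((ι s)⁻¹).val) = e := by
    intro s
    rw [stmt4_aux_conj h hdiag ι hι s e 2 hbr2, smul_smul, ← zpow_add₀ (Units.ne_zero s)]
    norm_num
  -- decomposition of elements of `C`
  have hdecomp : ∀ v ∈ C, ∃ μs : ℂ →₀ Matrix (Fin N) (Fin N) ℂ,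
      (∀ μ, μs μ ∈ C) ∧
      (∀ μ, ∃ k : ℤ, k ≤ 1 ∧
        h * μs μ - μs μ * h = ((k : ℤ) : ℂ) • μs μ) ∧
      (∑ μ ∈ μs.support, μs μ) = v := by
    intro v hv
    have hTC : ∀ x ∈ C, T x ∈ C := by
      intro x hx; rw [hTapp]; exact hC1 x hx
    have hC2' : C ≤ ⨆ μ : ℂ, T.genEigenspace μ 1 := by
      refine hC2.trans (iSup_le fun k => iSup_le fun _ => ?_)
      exact le_iSup (fun μ : ℂ => T.genEigenspace μ 1) ((k : ℤ) : ℂ)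
    have hinf := Submodule.inf_iSup_genEigenspace hTC (1 : ℕ∞)
    have hv' : v ∈ ⨆ μ : ℂ, C ⊓ T.genEigenspace μ 1 := by
      rw [← hinf]; exact ⟨hv, hC2' hv⟩
    obtain ⟨μs, hμs, hsum⟩ := (Submodule.mem_iSup_iff_exists_finsupp _ _).mp hv'
    refine ⟨μs, fun μ => (hμs μ).1, ?_, hsum⟩
    intro μ
    by_cases hμ : μ ∈ μs.support
    swap
    · exact ⟨0, by norm_num, by simp [Finsupp.notMem_support_iff.mp hμ]⟩
    have hne : μs μ ≠ 0 := Finsupp.mem_support_iff.mp hμ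
    have heig : T (μs μ) = μ • μs μ :=
      Module.End.mem_eigenspace_iff.mp (hμs μ).2
    -- show `μ` is an integer `≤ 1`
    by_cases hint : ∃ k : ℤ, k ≤ 1 ∧ μ = ((k : ℤ) : ℂ)
    · obtain ⟨k, hk1, rfl⟩ := hint
      exact ⟨k, hk1, by rw [← hTapp, heig]⟩
    · exfalso
      push_neg at hint
      have hdisj := Module.End.independent_genEigenspace T (1 : ℕ∞) (i := μ)
      have hle : (⨆ k : ℤ, ⨆ _ : k ≤ 1, T.genEigenspace ((k : ℤ) : ℂ) 1)
          ≤ ⨆ ν ≠ μ, T.genEigenspace ν 1 := by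
        refine iSup_le fun k => iSup_le fun hk => ?_
        have : ((k : ℤ) : ℂ) ≠ μ := fun habs => hint k hk habs.symm
        exact le_iSup₂ (f := fun ν (_ : ν ≠ μ) => T.genEigenspace ν 1) ((k : ℤ) : ℂ) this
      have h0 : μs μ ∈ (T.genEigenspace μ 1) ⊓ (⨆ ν ≠ μ, T.genEigenspace ν 1) :=
        ⟨(hμs μ).2, hle (hC2 ((hμs μ).1))⟩
      rw [hdisj.eq_bot] at h0
      exact hne h0
  -- a common computation for parts (ii) and (iii)
  have key : ∀ v ∈ C, ∃ (F : Finset ℂ) (w : ℂ → Matrix (Fin N) (Fin N) ℂ) (k : ℂ → ℤ),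
      (∀ μ ∈ F, w μ ∈ C) ∧ (∀ μ, k μ ≤ 1) ∧
      (∀ t : ℂˣ, ((t : ℂ) ^ (-2 : ℤ)) • ((ι t).val * (e + v) * ((ι t)⁻¹).val)
        = e + ∑ μ ∈ F, ((t : ℂ) ^ (k μ - 2)) • w μ) := by
    intro v hv
    obtain ⟨μs, hmemC, hsup, hsum⟩ := hdecomp v hv
    choose k hk1 hk2 using hsup
    refine ⟨μs.support, fun μ => μs μ, k, fun μ _ => hmemC μ, hk1, ?_⟩
    intro t
    have ht0 : (t : ℂ) ≠ 0 := Units.ne_zero t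
    have hv2 : (ι t).val * v * ((ι t)⁻¹).val
        = ∑ μ ∈ μs.support, ((t : ℂ) ^ (k μ)) • μs μ := by
      rw [← hsum, Finset.mul_sum, Finset.sum_mul]
      exact Finset.sum_congr rfl fun μ _ =>
        stmt4_aux_conj h hdiag ι hι t (μs μ) (k μ) (hk2 μ)
    rw [mul_add, add_mul, smul_add, part1 t, hv2, Finset.smul_sum]
    congr 1
    refine Finset.sum_congr rfl fun μ _ => ?_
    rw [smul_smul, ← zpow_add₀ ht0]
    congr 2
    omega
  refine ⟨part1, ?_, ?_⟩
  · -- part (ii)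
    intro v hv s
    obtain ⟨F, w, k, hwC, hk1, hconj⟩ := key v hv
    rw [hconj s, add_sub_cancel_left]
    exact Submodule.sum_mem C fun μ hμ => Submodule.smul_mem C _ (hwC μ hμ)
  · -- part (iii)
    intro v hv
    obtain ⟨F, w, k, hwC, hk1, hconj⟩ := key v hv
    have hlim : Tendsto (fun s : ℝ => e + ∑ μ ∈ F, ((s : ℂ) ^ (k μ - 2)) • w μ)
        atTop (nhds e) := by
      have h0 : Tendsto (fun s : ℝ => ∑ μ ∈ F, ((s : ℂ) ^ (k μ - 2)) • w μ)
          atTop (nhds 0) := by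
        have hterm : ∀ μ ∈ F, Tendsto (fun s : ℝ => ((s : ℂ) ^ (k μ - 2)) • w μ)
            atTop (nhds 0) := by
          intro μ _
          have hm : (k μ - 2 : ℤ) < 0 := by have := hk1 μ; omega
          have h1 : Tendsto (fun s : ℝ => s ^ (k μ - 2 : ℤ)) atTop (nhds 0) :=
            tendsto_zpow_atTop_zero hm
          have h2 : Tendsto (fun s : ℝ => ((s : ℂ) ^ (k μ - 2 : ℤ))) atTop (nhds 0) := by
            have := (Complex.continuous_ofReal.tendsto 0).comp h1
            simpa [Function.comp_def, ← Complex.ofReal_zpow] using this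
          simpa using h2.smul_const (w μ)
        have := tendsto_finset_sum F hterm
        simpa using this
      simpa using tendsto_const_nhds.add h0
    refine Filter.Tendsto.congr' ?_ hlim
    filter_upwards [eventually_ge_atTop (1 : ℝ)] with s hs
    have hs0 : (s : ℂ) ≠ 0 := by
      simp only [ne_eq, Complex.ofReal_eq_zero]; linarith
    rw [dif_neg hs0]
    exact (hconj (Units.mk0 (s : ℂ) hs0)).symm
end

section
/- Let R be a commutative ring, c, b_1, …, b_p ∈ R, and 1 ≤ a ≤ p. Then σ_a(c, c + b_1, …, c + b_p) = Σ_{l=0}^{a} binom(p − a + l + 1, l) · c^l · σ_{a−l}(b_1, …, b_p), where σ_k denotes the k-th elementary symmetric polynomial of the given family of elements (σ_0 = 1), the left-hand side being the k = a elementary symmetric polynomial of the p + 1 elements c, c + b_1, …, c + b_p. -/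
open Polynomial

/-- for a commutative ring `R`, elements `c, b_1, …, b_p ∈ R` and `1 ≤ a ≤ p`,
`σ_a(c, c + b_1, …, c + b_p) = Σ_{l=0}^{a} binom(p − a + l + 1, l) · c^l · σ_{a−l}(b_1, …, b_p)`,
where `σ_k` is the `k`-th elementary symmetric polynomial of the given family (`σ_0 = 1`). -/
theorem stmt8 (R : Type*) [CommRing R] (p : ℕ) (c : R) (b : Fin p → R) (a : ℕ)
    (ha1 : 1 ≤ a) (hap : a ≤ p) :
    Multiset.esymm (c ::ₘ (Finset.univ.val.map fun i : Fin p => c + b i)) a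
      = ∑ l ∈ Finset.range (a + 1),
          ((p - a + l + 1).choose l : R) * c ^ l
            * Multiset.esymm (Finset.univ.val.map fun i : Fin p => b i) (a - l) := by
  classical
  set s : Multiset R := c ::ₘ (Finset.univ.val.map fun i : Fin p => c + b i) with hs
  have hcard : Multiset.card s = p + 1 := by simp [hs]
  set g : R[X] := ∏ i : Fin p, (X + C (b i)) with hg
  set f : R[X] := X * g with hf
  -- coefficients of g are esymm of b
  have hgcoeff : ∀ k ≤ p, g.coeff k
      = Multiset.esymm (Finset.univ.val.map fun i : Fin p => b i) (p - k) := by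
    intro k hk
    have := Finset.prod_X_add_C_coeff (Finset.univ : Finset (Fin p)) b
      (k := k) (by simpa using hk)
    rw [hg, this, Finset.esymm_map_val]
    simp
  -- LHS equals a coefficient of `taylor c f`
  have key : s.esymm a = (Polynomial.taylor c f).coeff (p + 1 - a) := by
    have h1 : (s.map fun r => X + C r).prod.coeff (p + 1 - a)
        = s.esymm (Multiset.card s - (p + 1 - a)) :=
      Multiset.prod_X_add_C_coeff s (by omega)
    rw [hcard] at h1
    have h2 : p + 1 - (p + 1 - a) = a := by omega
    rw [h2] at h1
    rw [← h1]
    congr 1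
    rw [hs, Multiset.map_cons, Multiset.prod_cons, hf, Polynomial.taylor_mul,
      Polynomial.taylor_X]
    congr 1
    rw [Multiset.map_map, hg]
    have : (Polynomial.taylor c) (∏ i : Fin p, (X + C (b i)))
        = ∏ i : Fin p, (Polynomial.taylor c) (X + C (b i)) :=
      map_prod (Polynomial.taylorAlgHom c) _ _
    rw [this, Finset.prod_eq_multiset_prod]
    refine congrArg Multiset.prod (Multiset.map_congr rfl fun i _ => ?_)
    simp [Polynomial.taylor_X, Polynomial.taylor_C, C_add, add_assoc, Function.comp]
  rw [key]
  have hgdeg : g.natDegree ≤ p := by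
    refine le_trans (Polynomial.natDegree_prod_le _ _) ?_
    refine le_trans (Finset.sum_le_card_nsmul _ _ 1 fun i _ => ?_) (by simp)
    exact le_trans (le_of_eq Polynomial.natDegree_add_C) Polynomial.natDegree_X_le
  have hdeg : f.natDegree < p + 2 := by
    have h3 := Polynomial.natDegree_mul_le (p := (X : R[X])) (q := g)
    have h4 : (X : R[X]).natDegree ≤ 1 := Polynomial.natDegree_X_le
    rw [← hf] at h3
    omega
  have hexp : Polynomial.taylor c f
      = ∑ m ∈ Finset.range (p + 2), C (f.coeff m) * (X + C c) ^ m := by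
    rw [Polynomial.taylor_apply, Polynomial.comp, Polynomial.eval₂_eq_sum_range' _ hdeg]
  rw [hexp, Polynomial.finset_sum_coeff]
  simp_rw [Polynomial.coeff_C_mul, Polynomial.coeff_X_add_C_pow]
  set n := p + 1 - a with hn
  have himsub : Finset.image (fun l => n + l) (Finset.range (a + 1)) ⊆ Finset.range (p + 2) := by
    intro m hm
    simp only [Finset.mem_image, Finset.mem_range] at hm ⊢
    omega
  rw [← Finset.sum_subset himsub ?_]
  · rw [Finset.sum_image (by intro x _ y _ h; simp only at h; omega)]
    refine Finset.sum_congr rfl fun l hl => ?_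
    simp only [Finset.mem_range] at hl
    have h1 : n + l - n = l := by omega
    have h2 : (n + l).choose n = (n + l).choose l := by
      exact Nat.choose_symm_add
    have h3 : n + l = (p - a + l) + 1 := by omega
    have h4 : f.coeff (n + l) = g.coeff (p - a + l) := by
      rw [h3, hf, Polynomial.coeff_X_mul]
    have h5 : p - (p - a + l) = a - l := by omega
    rw [h1, h2, h4, hgcoeff _ (by omega), h5, h3]
    ring
  · intro m hm hnm
    simp only [Finset.mem_range] at hm
    simp only [Finset.mem_image, Finset.mem_range] at hnm
    have : m < n := by
      by_contra h
      push_neg at h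
      exact hnm ⟨m - n, by omega, by omega⟩
    rw [Nat.choose_eq_zero_of_lt this]
    simp
end

section
/- Let n ≥ 2 and let v = (v_1,…,v_{n−1}) and d = (d_1,…,d_{n−1}) be integers. Set v_0 = v_n = 0, d_n = 0, (d − Cv)_j = d_j − 2v_j + v_{j−1} + v_{j+1} for 1 ≤ j ≤ n−1 and (d − Cv)_n = 0 (C being the Cartan matrix of type A_{n−1}). Define λ̌_i = Σ_{j=i}^{n} d_j and a_i = v_{n−1} + Σ_{j=i}^{n} (d − Cv)_j for 1 ≤ i ≤ n. Then 2 Σ_{i=1}^{n−1} v_i d_i − 2 Σ_{i=1}^{n−1} v_i² + 2 Σ_{i=1}^{n−2} v_i v_{i+1} = Σ_{i=1}^{n} (λ̌_i)² − Σ_{i=1}^{n} (a_i)². -/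
private lemma tele9 (f : ℕ → ℤ) {a b : ℕ} (h : a ≤ b) :
    ∑ j ∈ Finset.Ico a b, (f (j + 1) - f j) = f b - f a := by
  induction b with
  | zero =>
    have : a = 0 := Nat.le_zero.mp h
    subst this; simp
  | succ b ih =>
    rcases Nat.lt_or_ge a (b + 1) with h' | h'
    · have hab : a ≤ b := Nat.lt_succ_iff.mp h'
      rw [Finset.sum_Ico_succ_top hab, ih hab]; ring
    · have : a = b + 1 := le_antisymm h h'
      subst this; simp

private lemma csq9 (v : ℕ → ℤ) (N : ℕ) :
    ∑ k ∈ Finset.range (N + 1), (v k - v (k + 1)) ^ 2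
      = v 0 ^ 2 + v (N + 1) ^ 2 + 2 * ∑ k ∈ Finset.range N, v (k + 1) ^ 2
        - 2 * ∑ k ∈ Finset.range (N + 1), v k * v (k + 1) := by
  induction N with
  | zero => simp; ring
  | succ N ih =>
    rw [Finset.sum_range_succ (fun k => (v k - v (k + 1)) ^ 2) (N + 1), ih,
      Finset.sum_range_succ (fun k => v (k + 1) ^ 2) N,
      Finset.sum_range_succ (fun k => v k * v (k + 1)) (N + 1)]
    ring

private lemma iccr9 (f : ℕ → ℤ) (N : ℕ) :
    ∑ i ∈ Finset.Icc 1 N, f i = ∑ k ∈ Finset.range N, f (k + 1) := by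
  rw [← Finset.Ico_add_one_right_eq_Icc, Finset.sum_Ico_eq_sum_range]
  rw [show N + 1 - 1 = N from by omega]
  exact Finset.sum_congr rfl fun k _ => by rw [Nat.add_comm]

/-- the combinatorial identity
`2 Σ_{i=1}^{n−1} v_i d_i − 2 Σ_{i=1}^{n−1} v_i² + 2 Σ_{i=1}^{n−2} v_i v_{i+1}
  = Σ_{i=1}^{n} (λ̌_i)² − Σ_{i=1}^{n} (a_i)²`,
where `λ̌_i = Σ_{j=i}^{n} d_j`, `a_i = v_{n−1} + Σ_{j=i}^{n} (d − Cv)_j`, with the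
conventions `v_0 = v_n = 0`, `d_n = 0`, `(d − Cv)_j = d_j − 2v_j + v_{j−1} + v_{j+1}` for
`1 ≤ j ≤ n−1` and `(d − Cv)_n = 0`. -/
theorem stmt9 (n : ℕ) (hn : 2 ≤ n) (v d : ℕ → ℤ)
    (hv0 : v 0 = 0) (hvn : v n = 0) (hdn : d n = 0) :
    2 * (∑ i ∈ Finset.Icc 1 (n - 1), v i * d i)
      - 2 * (∑ i ∈ Finset.Icc 1 (n - 1), (v i) ^ 2)
      + 2 * (∑ i ∈ Finset.Icc 1 (n - 2), v i * v (i + 1))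
    = (∑ i ∈ Finset.Icc 1 n, (∑ j ∈ Finset.Icc i n, d j) ^ 2)
      - ∑ i ∈ Finset.Icc 1 n,
          (v (n - 1) + ∑ j ∈ Finset.Icc i n,
            (if j = n then 0 else d j - 2 * v j + v (j - 1) + v (j + 1))) ^ 2 := by
  obtain ⟨m, rfl⟩ : ∃ m, n = m + 2 := ⟨n - 2, by omega⟩
  clear hn
  rw [show m + 2 - 1 = m + 1 from by omega, show m + 2 - 2 = m from by omega]
  -- Step 1: the summand of the second sum equals `λ̌ i + (v (i-1) - v i)`.
  have key : ∀ i ∈ Finset.Icc 1 (m + 2),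
      (v (m + 1) + ∑ j ∈ Finset.Icc i (m + 2),
        (if j = m + 2 then 0 else d j - 2 * v j + v (j - 1) + v (j + 1)))
      = (∑ j ∈ Finset.Icc i (m + 2), d j) + (v (i - 1) - v i) := by
    intro i hi
    rw [Finset.mem_Icc] at hi
    have hin : i ≤ m + 2 := hi.2
    have e1 : ∑ j ∈ Finset.Icc i (m + 2),
        (if j = m + 2 then 0 else d j - 2 * v j + v (j - 1) + v (j + 1))
        = ∑ j ∈ Finset.Ico i (m + 2), (d j - 2 * v j + v (j - 1) + v (j + 1)) := by
      rw [← Finset.Ico_add_one_right_eq_Icc, Finset.sum_Ico_succ_top (by omega)]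
      rw [if_pos rfl, add_zero]
      exact Finset.sum_congr rfl fun j hj =>
        if_neg (Nat.ne_of_lt (Finset.mem_Ico.mp hj).2)
    have e2 : ∑ j ∈ Finset.Ico i (m + 2), (d j - 2 * v j + v (j - 1) + v (j + 1))
        = (∑ j ∈ Finset.Ico i (m + 2), d j)
          + (((fun j => v j - v (j - 1)) (m + 2)) - ((fun j => v j - v (j - 1)) i)) := by
      rw [← tele9 (fun j => v j - v (j - 1)) hin, ← Finset.sum_add_distrib]
      refine Finset.sum_congr rfl fun j hj => ?_
      simp only [Nat.add_sub_cancel]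
      ring
    have e3 : ∑ j ∈ Finset.Icc i (m + 2), d j = ∑ j ∈ Finset.Ico i (m + 2), d j := by
      rw [← Finset.Ico_add_one_right_eq_Icc, Finset.sum_Ico_succ_top (by omega), hdn, add_zero]
    rw [e1, e2, e3]
    simp only [show m + 2 - 1 = m + 1 from by omega, hvn]
    ring
  have key2 : ∑ i ∈ Finset.Icc 1 (m + 2),
      (v (m + 1) + ∑ j ∈ Finset.Icc i (m + 2),
        (if j = m + 2 then 0 else d j - 2 * v j + v (j - 1) + v (j + 1))) ^ 2
      = ∑ i ∈ Finset.Icc 1 (m + 2),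
        ((∑ j ∈ Finset.Icc i (m + 2), d j) + (v (i - 1) - v i)) ^ 2 :=
    Finset.sum_congr rfl fun i hi => by rw [key i hi]
  -- Step 2: expand the square.
  have hsq : ∑ i ∈ Finset.Icc 1 (m + 2),
      ((∑ j ∈ Finset.Icc i (m + 2), d j) + (v (i - 1) - v i)) ^ 2
      = (∑ i ∈ Finset.Icc 1 (m + 2), (∑ j ∈ Finset.Icc i (m + 2), d j) ^ 2)
        + 2 * (∑ i ∈ Finset.Icc 1 (m + 2),
            (∑ j ∈ Finset.Icc i (m + 2), d j) * (v (i - 1) - v i))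
        + ∑ i ∈ Finset.Icc 1 (m + 2), (v (i - 1) - v i) ^ 2 := by
    rw [Finset.mul_sum, ← Finset.sum_add_distrib, ← Finset.sum_add_distrib]
    exact Finset.sum_congr rfl fun i _ => by ring
  -- Step 3: the cross term, by swapping the double sum and telescoping.
  have hB : ∑ i ∈ Finset.Icc 1 (m + 2),
      (∑ j ∈ Finset.Icc i (m + 2), d j) * (v (i - 1) - v i)
      = -∑ j ∈ Finset.Icc 1 (m + 2), d j * v j := by
    simp only [← Finset.Ico_add_one_right_eq_Icc]
    have h1 : ∀ i ∈ Finset.Ico 1 (m + 2 + 1),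
        (∑ j ∈ Finset.Ico i (m + 2 + 1), d j) * (v (i - 1) - v i)
        = ∑ j ∈ Finset.Ico i (m + 2 + 1), (v (i - 1) - v i) * d j := fun i _ => by
      rw [Finset.sum_mul]
      exact Finset.sum_congr rfl fun j _ => mul_comm _ _
    rw [Finset.sum_congr rfl h1, Finset.sum_Ico_Ico_comm]
    have h2 : ∀ j ∈ Finset.Ico 1 (m + 2 + 1),
        ∑ i ∈ Finset.Ico 1 (j + 1), (v (i - 1) - v i) * d j = -(d j * v j) := by
      intro j hj
      rw [← Finset.sum_mul]
      have hc : ∑ i ∈ Finset.Ico 1 (j + 1), (v (i - 1) - v i) = -v j := by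
        have ht := tele9 (fun i => -v (i - 1)) (show 1 ≤ j + 1 by omega)
        rw [show (∑ i ∈ Finset.Ico 1 (j + 1), (v (i - 1) - v i))
            = ∑ i ∈ Finset.Ico 1 (j + 1),
              ((fun i => -v (i - 1)) (i + 1) - (fun i => -v (i - 1)) i) from
          Finset.sum_congr rfl fun i _ => by simp only [Nat.add_sub_cancel]; ring, ht]
        simp only [Nat.add_sub_cancel]
        rw [show (1 : ℕ) - 1 = 0 from rfl, hv0]
        ring
      rw [hc]; ring
    rw [Finset.sum_congr rfl h2]
    exact Finset.sum_neg_distrib (f := fun j => d j * v j)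
  -- Step 4: the quadratic term.
  have hC : ∑ i ∈ Finset.Icc 1 (m + 2), (v (i - 1) - v i) ^ 2
      = 2 * (∑ i ∈ Finset.Icc 1 (m + 1), v i ^ 2)
        - 2 * (∑ i ∈ Finset.Icc 1 m, v i * v (i + 1)) := by
    have e1 : ∑ i ∈ Finset.Icc 1 (m + 2), (v (i - 1) - v i) ^ 2
        = ∑ k ∈ Finset.range (m + 2), (v k - v (k + 1)) ^ 2 := by
      rw [iccr9]
      exact Finset.sum_congr rfl fun k _ => by simp only [Nat.add_sub_cancel]
    have e2 : ∑ i ∈ Finset.Icc 1 (m + 1), v i ^ 2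
        = ∑ k ∈ Finset.range (m + 1), v (k + 1) ^ 2 := iccr9 _ _
    have e3 : ∑ i ∈ Finset.Icc 1 m, v i * v (i + 1)
        = ∑ k ∈ Finset.range m, v (k + 1) * (v (k + 1 + 1)) := iccr9 _ _
    have e4 : ∑ k ∈ Finset.range (m + 2), v k * v (k + 1)
        = ∑ k ∈ Finset.range m, v (k + 1) * v (k + 1 + 1) := by
      rw [Finset.sum_range_succ' (fun k => v k * v (k + 1)) (m + 1), hv0,
        Finset.sum_range_succ (fun k => v (k + 1) * v (k + 1 + 1)) m]
      rw [show m + 1 + 1 = m + 2 from rfl, hvn]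
      ring
    rw [e1, e2, e3, csq9 v (m + 1), hv0, show m + 1 + 1 = m + 2 from rfl, hvn, e4]
    ring
  -- Step 5: relate `∑ d j * v j` with the first sum on the left.
  have hD : ∑ j ∈ Finset.Icc 1 (m + 2), d j * v j
      = ∑ i ∈ Finset.Icc 1 (m + 1), v i * d i := by
    rw [← Finset.Ico_add_one_right_eq_Icc, Finset.sum_Ico_succ_top (by omega), hvn, mul_zero, add_zero,
      show m + 2 = m + 1 + 1 from rfl, Finset.Ico_add_one_right_eq_Icc]
    exact Finset.sum_congr rfl fun i _ => mul_comm _ _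
  rw [key2, hsq, hB, hC, hD]
  ring
end

section
/- Suppose n ≥ 3, D_1 = ℂ^N and D_i = 0 for 2 ≤ i ≤ n−1 (so p_i = 0 and q_i = 0 for i ≥ 2). Let (x, x̄, p, q) ∈ Λ^c(v,d), and set b_1 = 0 and b_i = c_1 + ⋯ + c_{i−1} for 2 ≤ i ≤ n. Then: (i) for every 1 ≤ k ≤ n−1, Π_{i=1}^{k} (q_1 p_1 − b_i·Id_{D_1}) = q_1 x̄_1 ⋯ x̄_{k−1} x_{k−1} ⋯ x_1 p_1 (the case k = 1 reading q_1 p_1 = q_1 p_1); in particular the rank of Π_{i=1}^{k} (q_1 p_1 − b_i·Id_{D_1}) is at most v_k; and (ii) Π_{i=1}^{n} (q_1 p_1 − b_i·Id_{D_1}) = 0. -/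
namespace QuiverA

variable {V D : ℕ → Type} [∀ i, AddCommGroup (V i)] [∀ i, Module ℂ (V i)]
  [∀ i, AddCommGroup (D i)] [∀ i, Module ℂ (D i)]

/-- if `n ≥ 3`, `D_1 = ℂ^N` and `D_i = 0` for `2 ≤ i ≤ n−1` (encoded by
`p_i = 0`, `q_i = 0` for `i ≥ 2`), `(x, x̄, p, q) ∈ Λ^c(v,d)`, `b_1 = 0`,
`b_i = c_1 + ⋯ + c_{i−1}`, then:

(i) for every `1 ≤ k ≤ n−1`,
`Π_{i=1}^{k} (q_1 p_1 − b_i·Id) = q_1 x̄_1 ⋯ x̄_{k−1} x_{k−1} ⋯ x_1 p_1`, and in particular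
the rank of `Π_{i=1}^{k} (q_1 p_1 − b_i·Id)` is at most `v_k = dim V_k`;

(ii) `Π_{i=1}^{n} (q_1 p_1 − b_i·Id) = 0`.

The quadruple is encoded by total families of maps which vanish outside the index ranges
of the `A_{n-1}`-quiver, the relations of `Λ^c(v,d)` being the family
`c_{i+1}·Id + x̄_{i+1} x_{i+1} = x_i x̄_i + p_{i+1} q_{i+1}` (out-of-range terms zero). -/
theorem stmt10 (n N : ℕ) (hn : 3 ≤ n)
    [∀ i, FiniteDimensional ℂ (V i)] [∀ i, FiniteDimensional ℂ (D i)]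
    (hD1 : Module.finrank ℂ (D 1) = N)
    (c : ℕ → ℂ)
    (x : ∀ i, V i →ₗ[ℂ] V (i + 1)) (xbar : ∀ i, V (i + 1) →ₗ[ℂ] V i)
    (p : ∀ i, D i →ₗ[ℂ] V i) (q : ∀ i, V i →ₗ[ℂ] D i)
    (hx : ∀ i, ¬(1 ≤ i ∧ i + 1 ≤ n - 1) → x i = 0)
    (hxbar : ∀ i, ¬(1 ≤ i ∧ i + 1 ≤ n - 1) → xbar i = 0)
    (hp : ∀ i, ¬(1 ≤ i ∧ i ≤ n - 1) → p i = 0)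
    (hq : ∀ i, ¬(1 ≤ i ∧ i ≤ n - 1) → q i = 0)
    (hp2 : ∀ i, 2 ≤ i → p i = 0)
    (hq2 : ∀ i, 2 ≤ i → q i = 0)
    (hrel : ∀ i : ℕ, i + 1 ≤ n - 1 →
      (c (i + 1)) • (LinearMap.id : V (i + 1) →ₗ[ℂ] V (i + 1)) + (xbar (i + 1)) ∘ₗ (x (i + 1))
        = (x i) ∘ₗ (xbar i) + (p (i + 1)) ∘ₗ (q (i + 1)))
    (b : ℕ → ℂ) (hb : ∀ i, b i = ∑ s ∈ Finset.Icc 1 (i - 1), c s) :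
    (∀ k : ℕ, 1 ≤ k → k ≤ n - 1 →
      ((List.range k).map (fun t =>
          ((q 1 ∘ₗ p 1 : Module.End ℂ (D 1)) - (b (t + 1)) • 1))).prod
        = (q 1) ∘ₗ (xbarPath xbar 1 k) ∘ₗ (xPath x 1 k) ∘ₗ (p 1)
      ∧ LinearMap.rank
          (((List.range k).map (fun t =>
            ((q 1 ∘ₗ p 1 : Module.End ℂ (D 1)) - (b (t + 1)) • 1))).prod : Module.End ℂ (D 1))
          ≤ (Module.finrank ℂ (V k) : Cardinal))
    ∧ ((List.range n).map (fun t =>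
        ((q 1 ∘ₗ p 1 : Module.End ℂ (D 1)) - (b (t + 1)) • 1))).prod = 0 := by
  obtain ⟨m, rfl⟩ : ∃ m, n = m + 1 := ⟨n - 1, by omega⟩
  have hm : 2 ≤ m := by omega
  have hx1 : xPath x 1 1 = LinearMap.id := rfl
  have hxb1 : xbarPath xbar 1 1 = LinearMap.id := rfl
  have hxs : ∀ k, 1 ≤ k → xPath x 1 (k+1) = (x k) ∘ₗ xPath x 1 k := by
    intro k hk; rw [xPath, dif_neg (by omega)]
  have hxbs : ∀ k, 1 ≤ k → xbarPath xbar 1 (k+1) = xbarPath xbar 1 k ∘ₗ xbar k := by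
    intro k hk; rw [xbarPath, dif_neg (by omega)]
  have rel0 : ∀ w : V 1, p 1 (q 1 w) = c 1 • w + xbar 1 (x 1 w) := by
    intro w
    have h := LinearMap.congr_fun (hrel 0 (by omega)) w
    simp only [hx 0 (by omega), LinearMap.add_apply, LinearMap.comp_apply,
      LinearMap.smul_apply, LinearMap.id_apply, LinearMap.zero_apply, map_zero, zero_add] at h
    exact h.symm
  have relk : ∀ k, 1 ≤ k → k + 1 ≤ m → ∀ v : V (k+1),
      x k (xbar k v) = c (k+1) • v + xbar (k+1) (x (k+1) v) := by
    intro k hk1 hk v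
    have h := LinearMap.congr_fun (hrel k (by omega)) v
    simp only [hp2 (k+1) (by omega), LinearMap.add_apply, LinearMap.comp_apply,
      LinearMap.smul_apply, LinearMap.id_apply, LinearMap.zero_apply, map_zero, add_zero] at h
    exact h.symm
  have push : ∀ k, 1 ≤ k → k ≤ m → ∀ w : V 1,
      xPath x 1 k (xbar 1 (x 1 w))
        = (∑ s ∈ Finset.Icc 2 k, c s) • xPath x 1 k w + xbar k (x k (xPath x 1 k w)) := by
    intro k
    induction k with
    | zero => intro h; omega
    | succ k ih =>
      intro _ hk w
      rcases Nat.eq_zero_or_pos k with h0 | hpos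
      · subst h0
        rw [hx1]
        simp [Finset.Icc_eq_empty (by omega : ¬ (2:ℕ) ≤ 1)]
      · rw [hxs k hpos]
        simp only [LinearMap.comp_apply]
        rw [ih hpos (by omega) w, map_add, map_smul,
          relk k hpos (by omega) (x k (xPath x 1 k w)),
          Finset.sum_Icc_succ_top (by omega : 2 ≤ k+1)]
        module
  have hIoc : Finset.Icc 2 = Finset.Ioc 1 := by
    funext k; exact Finset.Icc_add_one_left_eq_Ioc 1 k
  have hb' : ∀ k, 1 ≤ k → b (k+1) = c 1 + ∑ s ∈ Finset.Icc 2 k, c s := by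
    intro k hk
    rw [hb, show (k+1)-1 = k from rfl, Finset.Icc_eq_cons_Ioc hk, Finset.sum_cons, hIoc]
  have step : ∀ k, 1 ≤ k → k ≤ m → ∀ u : D 1,
      q 1 (xbarPath xbar 1 k (xPath x 1 k (p 1 (q 1 (p 1 u)))))
        - b (k+1) • q 1 (xbarPath xbar 1 k (xPath x 1 k (p 1 u)))
      = q 1 (xbarPath xbar 1 k (xbar k (x k (xPath x 1 k (p 1 u))))) := by
    intro k hk1 hk u
    rw [rel0 (p 1 u), map_add, map_smul, push k hk1 hk (p 1 u), hb' k hk1]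
    simp only [map_add, map_smul]
    module
  have main : ∀ k, 1 ≤ k → k ≤ m →
      ((List.range k).map (fun t =>
          ((q 1 ∘ₗ p 1 : Module.End ℂ (D 1)) - (b (t + 1)) • 1))).prod
        = (q 1) ∘ₗ (xbarPath xbar 1 k) ∘ₗ (xPath x 1 k) ∘ₗ (p 1) := by
    intro k
    induction k with
    | zero => intro h; omega
    | succ k ih =>
      intro _ hk
      rcases Nat.eq_zero_or_pos k with h0 | hpos
      · subst h0
        have hb1 : b 1 = 0 := by rw [hb]; simp
        rw [hx1, hxb1]
        simp [hb1, List.range_succ]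
      · have e : ((List.range (k+1)).map (fun t =>
            ((q 1 ∘ₗ p 1 : Module.End ℂ (D 1)) - (b (t + 1)) • 1))).prod
            = ((List.range k).map (fun t =>
              ((q 1 ∘ₗ p 1 : Module.End ℂ (D 1)) - (b (t + 1)) • 1))).prod
              * ((q 1 ∘ₗ p 1 : Module.End ℂ (D 1)) - (b (k + 1)) • 1) := by
          rw [List.range_succ, List.map_append, List.prod_append]; simp
        rw [e, ih hpos (by omega), hxs k hpos, hxbs k hpos]
        ext u
        simp only [Module.End.mul_apply, LinearMap.comp_apply, LinearMap.sub_apply,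
          LinearMap.smul_apply, Module.End.one_apply, map_sub, map_smul]
        exact step k hpos (by omega) u
  constructor
  · intro k hk1 hk
    refine ⟨main k hk1 hk, ?_⟩
    rw [main k hk1 hk, Module.finrank_eq_rank,
      show (q 1) ∘ₗ (xbarPath xbar 1 k) ∘ₗ (xPath x 1 k) ∘ₗ (p 1)
        = (q 1 ∘ₗ xbarPath xbar 1 k) ∘ₗ (xPath x 1 k ∘ₗ p 1) by
          simp only [LinearMap.comp_assoc]]
    exact le_trans (LinearMap.rank_comp_le_left _ _) (LinearMap.rank_le_domain _)
  · have e : ((List.range (m+1)).map (fun t =>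
        ((q 1 ∘ₗ p 1 : Module.End ℂ (D 1)) - (b (t + 1)) • 1))).prod
        = ((List.range m).map (fun t =>
          ((q 1 ∘ₗ p 1 : Module.End ℂ (D 1)) - (b (t + 1)) • 1))).prod
          * ((q 1 ∘ₗ p 1 : Module.End ℂ (D 1)) - (b (m + 1)) • 1) := by
      rw [List.range_succ, List.map_append, List.prod_append]; simp
    rw [e, main m (by omega) le_rfl]
    ext u
    simp only [Module.End.mul_apply, LinearMap.comp_apply, LinearMap.sub_apply,
      LinearMap.smul_apply, Module.End.one_apply, map_sub, map_smul, LinearMap.zero_apply]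
    rw [step m (by omega) le_rfl u, hx m (by omega), LinearMap.zero_apply, map_zero,
      map_zero, map_zero]

end QuiverA
end
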